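/- Let ν ≤ ν' be Newton vectors in ℚⁿ. Then 2·𝐀(ν,ν') = 2·𝐢(ν,ν') + 𝐛₁(ν,ν') + 𝐛₂(ν,ν'). (This is Pick's theorem applied to the region between the two Newton polygons: 𝐀 is its area, 𝐢 the number of interior lattice points, and 𝐛₁, 𝐛₂ the numbers of lattice points on the lower, respectively upper, polygon that do not lie on the other polygon; lattice points common to both polygons are not counted.) -/

import Mathlib

/-- Partial sum `P_ν(j) = ν₁ + ⋯ + ν_j` (0-indexed entries `ν 0, …, ν (n-1)`). -/
def newtonP (ν : ℕ → ℚ) (j : ℕ) : ℚ := ∑ k ∈ Finset.range j, ν k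

/-- A rational number is an integer. -/
def IsIntQ (q : ℚ) : Prop := ∃ m : ℤ, (m : ℚ) = q

/-- `ν` is a Newton vector (of length `n`): weakly decreasing, integral total sum, and
integral partial sum at every breakpoint (so the Newton polygon has lattice vertices). -/
def IsNewton (n : ℕ) (ν : ℕ → ℚ) : Prop :=
  (∀ k, k + 1 < n → ν (k + 1) ≤ ν k) ∧
  IsIntQ (newtonP ν n) ∧
  ∀ j, 1 ≤ j → j ≤ n - 1 → ν (j - 1) ≠ ν j → IsIntQ (newtonP ν j)

/-- The dominance order `ν ≤ ν'` on Newton vectors. -/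
def NewtonLE (n : ℕ) (ν ν' : ℕ → ℚ) : Prop :=
  newtonP ν n = newtonP ν' n ∧ ∀ j, 1 ≤ j → j ≤ n - 1 → newtonP ν j ≤ newtonP ν' j

/-- `𝐢(ν,ν')`: the number of lattice points strictly between the two Newton polygons. -/
noncomputable def nI (n : ℕ) (ν ν' : ℕ → ℚ) : ℕ :=
  Set.ncard {p : ℕ × ℤ | 1 ≤ p.1 ∧ p.1 ≤ n - 1 ∧
    newtonP ν p.1 < (p.2 : ℚ) ∧ (p.2 : ℚ) < newtonP ν' p.1}

/-- `𝐛₁(ν,ν')`: lattice points on the lower polygon not lying on the upper one. -/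
noncomputable def nB1 (n : ℕ) (ν ν' : ℕ → ℚ) : ℕ :=
  Set.ncard {j : ℕ | 1 ≤ j ∧ j ≤ n - 1 ∧ IsIntQ (newtonP ν j) ∧ newtonP ν j < newtonP ν' j}

/-- `𝐛₂(ν,ν')`: lattice points on the upper polygon not lying on the lower one. -/
noncomputable def nB2 (n : ℕ) (ν ν' : ℕ → ℚ) : ℕ :=
  Set.ncard {j : ℕ | 1 ≤ j ∧ j ≤ n - 1 ∧ IsIntQ (newtonP ν' j) ∧ newtonP ν j < newtonP ν' j}

/-- `𝐀(ν,ν') = Σ_{j=1}^{n-1} (P_{ν'}(j) − P_ν(j))`, the area between the polygons. -/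
def nA (n : ℕ) (ν ν' : ℕ → ℚ) : ℚ :=
  ∑ j ∈ Finset.Icc 1 (n - 1), (newtonP ν' j - newtonP ν j)


namespace PickAux
open Finset
open scoped Classical

lemma isIntQ_floor {x : ℚ} (h : IsIntQ x) : ((⌊x⌋ : ℚ)) = x := by
  obtain ⟨m, rfl⟩ := h; simp

lemma isIntQ_ceil {x : ℚ} (h : IsIntQ x) : ((⌈x⌉ : ℚ)) = x := by
  obtain ⟨m, rfl⟩ := h; simp

lemma not_int_ceil {x : ℚ} (h : ¬ IsIntQ x) : (⌈x⌉ : ℤ) = ⌊x⌋ + 1 := by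
  have h1 : x < (⌊x⌋ : ℚ) + 1 := Int.lt_floor_add_one x
  have h2 : (⌊x⌋ : ℚ) < x := by
    rcases lt_or_eq_of_le (Int.floor_le x) with h' | h'
    · exact h'
    · exact absurd ⟨⌊x⌋, h'⟩ h
  have hle : ⌈x⌉ ≤ ⌊x⌋ + 1 := Int.ceil_le.2 (by push_cast; linarith)
  have hge : ⌊x⌋ + 1 ≤ ⌈x⌉ := by
    have := Int.lt_ceil.2 h2
    omega
  omega

lemma isIntQ_neg {x : ℚ} : IsIntQ (-x) ↔ IsIntQ x := by
  constructor
  · rintro ⟨m, hm⟩; exact ⟨-m, by push_cast; linarith⟩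
  · rintro ⟨m, hm⟩; exact ⟨-m, by push_cast; linarith⟩

noncomputable def H (x : ℚ) : ℚ := 2*x - (⌊x⌋ : ℚ) - (⌈x⌉ : ℚ)

lemma H_neg (x : ℚ) : H (-x) = - H x := by
  unfold H
  rw [Int.floor_neg, Int.ceil_neg]
  push_cast
  ring

lemma H_int {x : ℚ} (h : IsIntQ x) : H x = 0 := by
  unfold H
  rw [isIntQ_floor h, isIntQ_ceil h]; ring

lemma H_half {x : ℚ} (h : IsIntQ (2 * x)) : H x = 0 := by
  by_cases hx : IsIntQ x
  · exact H_int hx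
  · obtain ⟨m, hm⟩ := h
    have h1 : (⌊x⌋ : ℚ) < x := by
      rcases lt_or_eq_of_le (Int.floor_le x) with h' | h'
      · exact h'
      · exact absurd ⟨⌊x⌋, h'⟩ hx
    have h2 : x < (⌊x⌋ : ℚ) + 1 := Int.lt_floor_add_one x
    have hm1 : 2 * ⌊x⌋ < m := by exact_mod_cast (by push_cast; linarith : ((2 * ⌊x⌋ : ℤ) : ℚ) < (m : ℚ))
    have hm2 : m < 2 * ⌊x⌋ + 2 := by exact_mod_cast (by push_cast; linarith : ((m : ℤ) : ℚ) < ((2 * ⌊x⌋ + 2 : ℤ) : ℚ))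
    have hm3 : m = 2 * ⌊x⌋ + 1 := by omega
    unfold H
    rw [not_int_ceil hx]
    have : (m : ℚ) = 2 * (⌊x⌋ : ℚ) + 1 := by exact_mod_cast hm3
    push_cast
    linarith [hm, this]

lemma H_pair {x y : ℚ} (hx : ¬ IsIntQ x) (hxy : IsIntQ (x + y)) : H x + H y = 0 := by
  have hy : ¬ IsIntQ y := by
    intro ⟨m, hm⟩
    obtain ⟨k, hk⟩ := hxy
    exact hx ⟨k - m, by push_cast; linarith⟩
  obtain ⟨k, hk⟩ := hxy
  have hfx : (⌊x⌋ : ℚ) < x := by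
    rcases lt_or_eq_of_le (Int.floor_le x) with h' | h'
    · exact h'
    · exact absurd ⟨⌊x⌋, h'⟩ hx
  have hfy : (⌊y⌋ : ℚ) < y := by
    rcases lt_or_eq_of_le (Int.floor_le y) with h' | h'
    · exact h'
    · exact absurd ⟨⌊y⌋, h'⟩ hy
  have h2 : x < (⌊x⌋ : ℚ) + 1 := Int.lt_floor_add_one x
  have h2' : y < (⌊y⌋ : ℚ) + 1 := Int.lt_floor_add_one y
  have hsum : ⌊x⌋ + ⌊y⌋ = k - 1 := by
    have l1 : (⌊x⌋ + ⌊y⌋ : ℤ) < k := by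
      exact_mod_cast (by push_cast; linarith : ((⌊x⌋ + ⌊y⌋ : ℤ) : ℚ) < (k : ℚ))
    have l2 : (k : ℤ) < ⌊x⌋ + ⌊y⌋ + 2 := by
      exact_mod_cast (by push_cast; linarith : ((k : ℤ) : ℚ) < ((⌊x⌋ + ⌊y⌋ + 2 : ℤ) : ℚ))
    omega
  unfold H
  rw [not_int_ceil hx, not_int_ceil hy]
  have : ((⌊x⌋ + ⌊y⌋ : ℤ) : ℚ) = (k : ℚ) - 1 := by exact_mod_cast hsum
  push_cast at this ⊢
  linarith [hk, this]


section Core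
variable (n : ℕ) (a b : ℕ → ℚ)

lemma touch_step
    (hla : ∀ j, 1 ≤ j → j + 1 ≤ n → ¬IsIntQ (a j) → a (j+1) + a (j-1) = 2 * a j)
    (hlb : ∀ j, 1 ≤ j → j + 1 ≤ n → ¬IsIntQ (b j) → b (j+1) + b (j-1) = 2 * b j)
    (hab : ∀ j, j ≤ n → a j ≤ b j)
    {k : ℕ} (hk1 : 1 ≤ k) (hk2 : k + 1 ≤ n) (hint : ¬IsIntQ (a k)) (ht : a k = b k) :
    a (k-1) = b (k-1) ∧ a (k+1) = b (k+1) := by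
  have h1 := hla k hk1 hk2 hint
  have h2 := hlb k hk1 hk2 (by rw [← ht]; exact hint)
  have e1 := hab (k-1) (by omega)
  have e2 := hab (k+1) hk2
  constructor <;> linarith

lemma spread
    (hla : ∀ j, 1 ≤ j → j + 1 ≤ n → ¬IsIntQ (a j) → a (j+1) + a (j-1) = 2 * a j)
    (hlb : ∀ j, 1 ≤ j → j + 1 ≤ n → ¬IsIntQ (b j) → b (j+1) + b (j-1) = 2 * b j)
    (hab : ∀ j, j ≤ n → a j ≤ b j)
    {p q : ℕ} (hq : q ≤ n)
    (hni : ∀ k, p < k → k < q → ¬IsIntQ (a k))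
    {j : ℕ} (hpj : p < j) (hjq : j < q) (ht : a j = b j) :
    ∀ l, p < l → l < q → a l = b l := by
  have up : ∀ d, j + d < q → a (j + d) = b (j + d) := by
    intro d
    induction d with
    | zero => intro _; simpa using ht
    | succ d ih =>
      intro hd
      have hprev : a (j + d) = b (j + d) := ih (by omega)
      have := (touch_step n a b hla hlb hab (k := j + d) (by omega) (by omega)
        (hni (j + d) (by omega) (by omega)) hprev).2
      have he : j + (d + 1) = (j + d) + 1 := by omega
      rw [he]; exact this
  have down : ∀ d, p < j - d → a (j - d) = b (j - d) := by
    intro d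
    induction d with
    | zero => intro _; simpa using ht
    | succ d ih =>
      intro hd
      have hd' : p < j - d := by omega
      have hprev : a (j - d) = b (j - d) := ih hd'
      have := (touch_step n a b hla hlb hab (k := j - d) (by omega) (by omega)
        (hni (j - d) hd' (by omega)) hprev).1
      have he : j - (d + 1) = (j - d) - 1 := by omega
      rw [he]; exact this
  intro l hl1 hl2
  rcases le_or_gt j l with h | h
  · have := up (l - j) (by omega)
    rwa [Nat.add_sub_cancel' h] at this
  · have := down (j - l) (by omega)
    rwa [Nat.sub_sub_self (le_of_lt h)] at this

lemma affine
    (hla : ∀ j, 1 ≤ j → j + 1 ≤ n → ¬IsIntQ (a j) → a (j+1) + a (j-1) = 2 * a j)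
    {p q : ℕ} (hq : q ≤ n)
    (hni : ∀ k, p < k → k < q → ¬IsIntQ (a k)) :
    ∀ k, p ≤ k → k ≤ q → a k = a p + ((k : ℚ) - (p : ℚ)) * (a (p+1) - a p) := by
  have diffs : ∀ k, p ≤ k → k < q → a (k + 1) - a k = a (p+1) - a p := by
    intro k
    induction k with
    | zero =>
      intro h1 _
      have : p = 0 := by omega
      subst this; ring
    | succ k ih =>
      intro h1 h2
      rcases Nat.lt_or_ge p (k+1) with hp | hp
      · have hint := hni (k+1) hp h2
        have hl := hla (k+1) (by omega) (by omega) hint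
        have hk : k + 1 - 1 = k := by omega
        rw [hk] at hl
        have ihk : a (k + 1) - a k = a (p+1) - a p := ih (by omega) (by omega)
        linarith
      · have : p = k + 1 := by omega
        subst this; ring
  intro k hk
  induction k with
  | zero =>
    intro _
    have : p = 0 := by omega
    subst this; simp
  | succ k ih =>
    intro h2
    rcases Nat.lt_or_ge p (k+1) with hp | hp
    · have ihk := ih (by omega) (by omega)
      have hd := diffs k (by omega) (by omega)
      push_cast
      push_cast at ihk
      linarith
    · have : p = k + 1 := by omega
      subst this; simp
  -- note: `ih` in succ case has type hk → ..., fix below if needed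

end Core

/-- `Good j (p,q)`: interval structure around `j`. -/
def Good (a : ℕ → ℚ) (n j : ℕ) (pq : ℕ × ℕ) : Prop :=
  pq.1 < j ∧ j < pq.2 ∧ pq.2 ≤ n ∧ IsIntQ (a pq.1) ∧ IsIntQ (a pq.2) ∧
    ∀ k, pq.1 < k → k < pq.2 → ¬IsIntQ (a k)

lemma good_unique {a : ℕ → ℚ} {n j j' : ℕ} {pq pq' : ℕ × ℕ}
    (h : Good a n j pq) (h' : Good a n j' pq')
    (h1 : pq.1 < j' ) (h2 : j' < pq.2) : pq = pq' := by
  obtain ⟨hp, hq, hn, hip, hiq, hni⟩ := h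
  obtain ⟨hp', hq', hn', hip', hiq', hni'⟩ := h'
  have e1 : pq.1 = pq'.1 := by
    by_contra hne
    rcases Nat.lt_or_ge pq.1 pq'.1 with hc | hc
    · exact hni pq'.1 hc (by omega) hip'
    · exact hni' pq.1 (by omega) (by omega) hip
  have e2 : pq.2 = pq'.2 := by
    by_contra hne
    rcases Nat.lt_or_ge pq.2 pq'.2 with hc | hc
    · exact hni' pq.2 (by omega) hc hiq
    · exact hni pq'.2 (by omega) (by omega) hiq'
  exact Prod.ext e1 e2

lemma sum_H_zero (n : ℕ) (a b : ℕ → ℚ)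
    (ha0 : IsIntQ (a 0)) (han : IsIntQ (a n))
    (hla : ∀ j, 1 ≤ j → j + 1 ≤ n → ¬IsIntQ (a j) → a (j+1) + a (j-1) = 2 * a j)
    (hlb : ∀ j, 1 ≤ j → j + 1 ≤ n → ¬IsIntQ (b j) → b (j+1) + b (j-1) = 2 * b j)
    (hab : ∀ j, j ≤ n → a j ≤ b j) :
    ∑ j ∈ (Finset.Icc 1 (n-1)).filter (fun j => a j < b j ∧ ¬ IsIntQ (a j)), H (a j) = 0 := by
  set s := (Finset.Icc 1 (n-1)).filter (fun j => a j < b j ∧ ¬ IsIntQ (a j)) with hs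
  have hmem : ∀ j ∈ s, (1 ≤ j ∧ j ≤ n - 1) ∧ a j < b j ∧ ¬ IsIntQ (a j) := by
    intro j hj
    rw [hs, Finset.mem_filter, Finset.mem_Icc] at hj
    tauto
  have key : ∀ j ∈ s, ∃ pq : ℕ × ℕ, Good a n j pq := by
    intro j hj
    obtain ⟨⟨hj1, hj2⟩, _, hint⟩ := hmem j hj
    have hn2 : 2 ≤ n := by omega
    have hjn : j < n := by omega
    have hex : ∃ q', j < q' ∧ IsIntQ (a q') := ⟨n, hjn, han⟩
    set q := Nat.find hex with hqdef
    set p := Nat.findGreatest (fun k => IsIntQ (a k)) j with hpdef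
    have hip : IsIntQ (a p) :=
      Nat.findGreatest_spec (P := fun k => IsIntQ (a k)) (Nat.zero_le j) ha0
    have hpj : p < j := by
      have hle : p ≤ j := Nat.findGreatest_le j
      rcases lt_or_eq_of_le hle with h | h
      · exact h
      · exact absurd (h ▸ hip) hint
    have hqs := Nat.find_spec hex
    have hqn : q ≤ n := Nat.find_le ⟨hjn, han⟩
    refine ⟨(p, q), hpj, hqs.1, hqn, hip, hqs.2, ?_⟩
    intro k hk1 hk2
    rcases le_or_gt k j with h | h
    · exact Nat.findGreatest_is_greatest hk1 h
    · intro hint'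
      exact (Nat.find_min hex hk2) ⟨h, hint'⟩
  have gsig : ∀ (j' : ℕ) (hj' : j' ∈ s) (pq : ℕ × ℕ), Good a n j' pq →
      (key j' hj').choose = pq := fun j' hj' pq hg =>
    good_unique (key j' hj').choose_spec hg (key j' hj').choose_spec.1
      (key j' hj').choose_spec.2.1
  -- basic consequences of Good, for the chosen interval of each j
  have main : ∀ (j : ℕ) (hj : j ∈ s),
      let p := (key j hj).choose.1; let q := (key j hj).choose.2; let σ := p + q - j;
      (a j + a σ = a p + a q) ∧ IsIntQ (a p + a q) ∧ σ ∈ s ∧ Good a n σ (p, q) := by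
    intro j hj
    obtain ⟨⟨hj1, hj2⟩, hjlt, hint⟩ := hmem j hj
    obtain ⟨hp, hq, hqn, hip, hiq, hni⟩ := (key j hj).choose_spec
    set p := (key j hj).choose.1 with hpdef
    set q := (key j hj).choose.2 with hqdef
    set σ := p + q - j with hσdef
    have hpσ : p < σ := by omega
    have hσq : σ < q := by omega
    have haff := affine n a hla hqn hni
    have e1 := haff j (le_of_lt hp) (le_of_lt hq)
    have e2 := haff σ (by omega) (by omega)
    have e3 := haff q (by omega) le_rfl
    have hcast : ((σ : ℕ) : ℚ) = (p : ℚ) + (q : ℚ) - (j : ℚ) := by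
      rw [hσdef, Nat.cast_sub (by omega)]; push_cast; ring
    have hsum : a j + a σ = a p + a q := by
      rw [e1, e2, e3, hcast]; ring
    have hintpq : IsIntQ (a p + a q) := by
      obtain ⟨mp, hmp⟩ := hip; obtain ⟨mq, hmq⟩ := hiq
      exact ⟨mp + mq, by push_cast; rw [hmp, hmq]⟩
    have hσint : ¬ IsIntQ (a σ) := hni σ hpσ hσq
    have hσlt : a σ < b σ := by
      rcases lt_or_eq_of_le (hab σ (by omega)) with h | h
      · exact h
      · exact absurd (spread n a b hla hlb hab hqn hni hpσ hσq h j hp hq)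
          (ne_of_lt hjlt)
    have hσs : σ ∈ s := by
      rw [hs, Finset.mem_filter, Finset.mem_Icc]
      exact ⟨⟨by omega, by omega⟩, hσlt, hσint⟩
    exact ⟨hsum, hintpq, hσs, ⟨hpσ, hσq, hqn, hip, hiq, hni⟩⟩
  refine Finset.sum_involution
    (fun j hj => (key j hj).choose.1 + (key j hj).choose.2 - j) ?_ ?_ ?_ ?_
  · -- pair sum zero
    intro j hj
    obtain ⟨hsum, hintpq, hσs, hgoodσ⟩ := main j hj
    obtain ⟨_, _, hint⟩ := hmem j hj
    exact H_pair hint (hsum ▸ hintpq)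
  · -- fixed points have H = 0
    intro j hj hne heq
    obtain ⟨hsum, hintpq, hσs, hgoodσ⟩ := main j hj
    rw [heq] at hsum
    exact hne (H_half (by rw [(by ring : 2 * a j = a j + a j), hsum]; exact hintpq))
  · -- membership
    intro j hj
    exact (main j hj).2.2.1
  · -- involution
    intro j hj
    obtain ⟨hsum, hintpq, hσs, hgoodσ⟩ := main j hj
    obtain ⟨hp, hq, hqn, hip, hiq, hni⟩ := (key j hj).choose_spec
    rw [gsig _ _ _ hgoodσ]
    · simp only
      omega
    · exact hσs


lemma nI_eq (n : ℕ) (ν ν' : ℕ → ℚ) :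
    nI n ν ν' = ∑ j ∈ Finset.Icc 1 (n-1),
      ((⌈newtonP ν' j⌉ - ⌊newtonP ν j⌋ - 1).toNat) := by
  classical
  set F : Finset (ℕ × ℤ) := (Finset.Icc 1 (n-1)).biUnion
    (fun j => (Finset.Ioo ⌊newtonP ν j⌋ ⌈newtonP ν' j⌉).image (fun m => (j, m))) with hF
  have hset : {p : ℕ × ℤ | 1 ≤ p.1 ∧ p.1 ≤ n - 1 ∧
      newtonP ν p.1 < (p.2 : ℚ) ∧ (p.2 : ℚ) < newtonP ν' p.1} = ↑F := by
    ext ⟨j, m⟩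
    simp only [Set.mem_setOf_eq, hF, Finset.coe_biUnion, Finset.mem_coe, Set.mem_iUnion,
      Finset.mem_image, Finset.mem_Ioo, Finset.mem_Icc]
    constructor
    · rintro ⟨h1, h2, h3, h4⟩
      exact ⟨j, ⟨h1, h2⟩, m, ⟨Int.floor_lt.2 h3, Int.lt_ceil.2 h4⟩, rfl⟩
    · rintro ⟨i, hi, m', ⟨hm1, hm2⟩, heq⟩
      obtain ⟨rfl, rfl⟩ := Prod.mk.inj heq
      exact ⟨hi.1, hi.2, Int.floor_lt.1 hm1, Int.lt_ceil.1 hm2⟩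
  rw [nI, hset, Set.ncard_coe_finset, hF]
  rw [Finset.card_biUnion]
  · refine Finset.sum_congr rfl fun j _ => ?_
    rw [Finset.card_image_of_injective _ (fun x y h => (Prod.mk.injEq _ _ _ _ ▸ h).2),
      Int.card_Ioo]
  · intro x hx y hy hxy
    simp only [Finset.disjoint_left, Finset.mem_image]
    rintro ⟨u, v⟩ ⟨m1, _, h1⟩ ⟨m2, _, h2⟩
    exact hxy ((Prod.mk.inj h1).1.symm ▸ (Prod.mk.inj h2).1.symm ▸ rfl)

lemma nB1_eq (n : ℕ) (ν ν' : ℕ → ℚ) :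
    nB1 n ν ν' = ((Finset.Icc 1 (n-1)).filter
      (fun j => IsIntQ (newtonP ν j) ∧ newtonP ν j < newtonP ν' j)).card := by
  rw [nB1, ← Set.ncard_coe_finset]
  congr 1
  ext j
  simp only [Set.mem_setOf_eq, Finset.coe_filter, Finset.mem_Icc]
  tauto

lemma column (x y : ℚ) (hxy : x ≤ y) :
    2*(y - x) - (2 * (((⌈y⌉ - ⌊x⌋ - 1).toNat : ℚ))
      + (if IsIntQ x ∧ x < y then (1:ℚ) else 0)
      + (if IsIntQ y ∧ x < y then (1:ℚ) else 0))
    = if x < y then H y - H x else 0 := by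
  rcases eq_or_lt_of_le hxy with rfl | h
  · simp only [lt_irrefl, and_false, if_false, if_neg (lt_irrefl x)]
    have : (⌈x⌉ - ⌊x⌋ - 1).toNat = 0 := by
      by_cases hx : IsIntQ x
      · have : (⌈x⌉ : ℚ) = (⌊x⌋ : ℚ) := by rw [isIntQ_ceil hx, isIntQ_floor hx]
        have h' : ⌈x⌉ = ⌊x⌋ := by exact_mod_cast this
        omega
      · have := not_int_ceil hx
        omega
    rw [this]
    norm_num
  · rw [if_pos h]
    have hnn : 0 ≤ ⌈y⌉ - ⌊x⌋ - 1 := by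
      have h1 : (⌊x⌋ : ℚ) < (⌈y⌉ : ℚ) :=
        lt_of_le_of_lt (Int.floor_le x) (lt_of_lt_of_le h (Int.le_ceil y))
      have : ⌊x⌋ < ⌈y⌉ := by exact_mod_cast h1
      omega
    have hcast : (((⌈y⌉ - ⌊x⌋ - 1).toNat : ℕ) : ℚ) = (⌈y⌉ : ℚ) - (⌊x⌋ : ℚ) - 1 := by
      rw [← Int.cast_natCast, Int.toNat_of_nonneg hnn]; push_cast; ring_nf
    rw [hcast]
    unfold H
    by_cases hx : IsIntQ x <;> by_cases hy : IsIntQ y <;>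
      simp only [hx, hy, h, and_true, true_and, if_true, if_false, not_true, not_false_iff,
        if_pos, if_neg, false_and] <;>
      push_cast
    · rw [isIntQ_floor hx, isIntQ_ceil hx, isIntQ_floor hy, isIntQ_ceil hy]; ring
    · have hcy : (⌈y⌉ : ℚ) = (⌊y⌋ : ℚ) + 1 := by exact_mod_cast not_int_ceil hy
      rw [isIntQ_floor hx, isIntQ_ceil hx, hcy]; ring
    · have hcx : (⌈x⌉ : ℚ) = (⌊x⌋ : ℚ) + 1 := by exact_mod_cast not_int_ceil hx
      rw [isIntQ_floor hy, isIntQ_ceil hy, hcx]; ring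
    · have hcy : (⌈y⌉ : ℚ) = (⌊y⌋ : ℚ) + 1 := by exact_mod_cast not_int_ceil hy
      have hcx : (⌈x⌉ : ℚ) = (⌊x⌋ : ℚ) + 1 := by exact_mod_cast not_int_ceil hx
      rw [hcy, hcx]; ring


lemma nB2_eq (n : ℕ) (ν ν' : ℕ → ℚ) :
    nB2 n ν ν' = ((Finset.Icc 1 (n-1)).filter
      (fun j => IsIntQ (newtonP ν' j) ∧ newtonP ν j < newtonP ν' j)).card := by
  rw [nB2, ← Set.ncard_coe_finset]
  congr 1
  ext j
  simp only [Set.mem_setOf_eq, Finset.coe_filter, Finset.mem_Icc]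
  tauto

end PickAux

open PickAux

/-- **Pick's theorem for Newton polygons** (Statement 0): for Newton vectors `ν ≤ ν'` in ℚⁿ,
`2·𝐀(ν,ν') = 2·𝐢(ν,ν') + 𝐛₁(ν,ν') + 𝐛₂(ν,ν')`. -/
theorem pick_newton_polygons (n : ℕ) (hn : 1 ≤ n) (ν ν' : ℕ → ℚ)
    (hν : IsNewton n ν) (hν' : IsNewton n ν') (hle : NewtonLE n ν ν') :
    2 * nA n ν ν' = 2 * (nI n ν ν' : ℚ) + (nB1 n ν ν' : ℚ) + (nB2 n ν ν' : ℚ) := by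
  classical
  set a := newtonP ν with hadef
  set b := newtonP ν' with hbdef
  -- basic facts
  have ha0 : a 0 = 0 := by simp [hadef, newtonP]
  have hb0 : b 0 = 0 := by simp [hbdef, newtonP]
  have hab : ∀ j, j ≤ n → a j ≤ b j := by
    intro j hj
    rcases Nat.eq_or_lt_of_le hj with rfl | hlt
    · exact le_of_eq hle.1
    · rcases Nat.eq_zero_or_pos j with rfl | hpos
      · rw [ha0, hb0]
      · exact hle.2 j hpos (by omega)
  have step : ∀ (μ : ℕ → ℚ) (j : ℕ), 1 ≤ j →
      newtonP μ (j+1) + newtonP μ (j-1) = 2 * newtonP μ j + μ j - μ (j-1) := by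
    intro μ j hj
    have h1 : newtonP μ (j+1) = newtonP μ j + μ j := Finset.sum_range_succ μ j
    have h2 : newtonP μ j = newtonP μ (j-1) + μ (j-1) := by
      conv_lhs => rw [(by omega : j = (j-1) + 1)]
      exact Finset.sum_range_succ μ (j-1)
    linarith
  have hla : ∀ j, 1 ≤ j → j + 1 ≤ n → ¬IsIntQ (a j) → a (j+1) + a (j-1) = 2 * a j := by
    intro j h1 h2 hint
    have hne : ν (j - 1) = ν j := by
      by_contra hne
      exact hint (hν.2.2 j h1 (by omega) hne)
    have := step ν j h1
    rw [hadef]; rw [hne] at this; linarith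
  have hlb : ∀ j, 1 ≤ j → j + 1 ≤ n → ¬IsIntQ (b j) → b (j+1) + b (j-1) = 2 * b j := by
    intro j h1 h2 hint
    have hne : ν' (j - 1) = ν' j := by
      by_contra hne
      exact hint (hν'.2.2 j h1 (by omega) hne)
    have := step ν' j h1
    rw [hbdef]; rw [hne] at this; linarith
  -- the two vanishing sums
  have hsumA : ∑ j ∈ (Finset.Icc 1 (n-1)).filter
      (fun j => a j < b j ∧ ¬ IsIntQ (a j)), H (a j) = 0 :=
    sum_H_zero n a b ⟨0, by rw [ha0]; norm_num⟩ hν.2.1 hla hlb hab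
  have hsumB : ∑ j ∈ (Finset.Icc 1 (n-1)).filter
      (fun j => a j < b j ∧ ¬ IsIntQ (b j)), H (b j) = 0 := by
    have h0 : IsIntQ (-(b 0)) := ⟨0, by rw [hb0]; norm_num⟩
    have hn' : IsIntQ (-(b n)) := isIntQ_neg.2 hν'.2.1
    have hla' : ∀ j, 1 ≤ j → j + 1 ≤ n → ¬IsIntQ (-(b j)) →
        (-(b (j+1))) + (-(b (j-1))) = 2 * (-(b j)) := by
      intro j h1 h2 hint
      have := hlb j h1 h2 (fun h => hint (isIntQ_neg.2 h))
      linarith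
    have hlb' : ∀ j, 1 ≤ j → j + 1 ≤ n → ¬IsIntQ (-(a j)) →
        (-(a (j+1))) + (-(a (j-1))) = 2 * (-(a j)) := by
      intro j h1 h2 hint
      have := hla j h1 h2 (fun h => hint (isIntQ_neg.2 h))
      linarith
    have hab' : ∀ j, j ≤ n → -(b j) ≤ -(a j) := fun j hj => neg_le_neg (hab j hj)
    have := sum_H_zero n (fun j => -(b j)) (fun j => -(a j)) h0 hn' hla' hlb' hab'
    simp only [neg_lt_neg_iff, isIntQ_neg, H_neg] at this
    rw [← neg_eq_zero, ← Finset.sum_neg_distrib]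
    convert this using 2
  -- expand counts
  rw [nI_eq, nB1_eq, nB2_eq, Finset.card_filter, Finset.card_filter]
  push_cast
  rw [nA, Finset.mul_sum]
  rw [← sub_eq_zero, ← hadef, ← hbdef]
  have expand : (∑ j ∈ Finset.Icc 1 (n-1), 2 * (b j - a j))
      - ((2 * ∑ j ∈ Finset.Icc 1 (n-1), (((⌈b j⌉ - ⌊a j⌋ - 1).toNat : ℚ)))
        + (∑ j ∈ Finset.Icc 1 (n-1), if IsIntQ (a j) ∧ a j < b j then (1:ℚ) else 0)
        + (∑ j ∈ Finset.Icc 1 (n-1), if IsIntQ (b j) ∧ a j < b j then (1:ℚ) else 0))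
      = ∑ j ∈ Finset.Icc 1 (n-1), (if a j < b j then H (b j) - H (a j) else 0) := by
    rw [Finset.mul_sum, ← Finset.sum_add_distrib, ← Finset.sum_add_distrib,
      ← Finset.sum_sub_distrib]
    refine Finset.sum_congr rfl fun j hj => ?_
    rw [Finset.mem_Icc] at hj
    exact column (a j) (b j) (hab j (by omega))
  rw [expand]
  rw [← Finset.sum_filter (fun j => a j < b j) (fun j => H (b j) - H (a j)),
    Finset.sum_sub_distrib]
  have hsub1 : (Finset.Icc 1 (n-1)).filter (fun j => a j < b j ∧ ¬ IsIntQ (a j)) ⊆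
      (Finset.Icc 1 (n-1)).filter (fun j => a j < b j) := by
    intro x hx
    simp only [Finset.mem_filter] at hx ⊢
    exact ⟨hx.1, hx.2.1⟩
  have hsub2 : (Finset.Icc 1 (n-1)).filter (fun j => a j < b j ∧ ¬ IsIntQ (b j)) ⊆
      (Finset.Icc 1 (n-1)).filter (fun j => a j < b j) := by
    intro x hx
    simp only [Finset.mem_filter] at hx ⊢
    exact ⟨hx.1, hx.2.1⟩
  have eA : ∑ j ∈ (Finset.Icc 1 (n-1)).filter (fun j => a j < b j), H (a j) = 0 := by
    rw [← Finset.sum_subset hsub1 ?van]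
    · exact hsumA
    case van =>
      intro x hx hnx
      simp only [Finset.mem_filter] at hx hnx
      exact H_int (by_contra fun hc => hnx ⟨hx.1, hx.2, hc⟩)
  have eB : ∑ j ∈ (Finset.Icc 1 (n-1)).filter (fun j => a j < b j), H (b j) = 0 := by
    rw [← Finset.sum_subset hsub2 ?van]
    · exact hsumB
    case van =>
      intro x hx hnx
      simp only [Finset.mem_filter] at hx hnx
      exact H_int (by_contra fun hc => hnx ⟨hx.1, hx.2, hc⟩)
  rw [eA, eB, sub_zero]
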